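/- Let Λ be a lattice of rank r in Euclidean space (a discrete subgroup generated by r linearly independent vectors), let λ_r(Λ) be its r-th successive minimum and μ(Λ) its covering radius with respect to the ℓ² norm (the supremum over points x in the real span of Λ of the distance from x to Λ). Then μ(Λ) ≤ (√r / 2)·λ_r(Λ). -/

import Mathlib

open Real Submodule RealInnerProductSpace

lemma nearest_plane (d : ℕ) : ∀ (n : ℕ) (v : Fin n → EuclideanSpace ℝ (Fin d)),
    ∀ x ∈ Submodule.span ℝ (Set.range v), ∃ c : Fin n → ℤ,
      ‖x - ∑ i, (c i : ℝ) • v i‖ ^ 2 ≤ (1/4) * ∑ i, ‖v i‖ ^ 2 := by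
  intro n
  induction n with
  | zero =>
      intro v x hx
      simp [Set.range_eq_empty, Submodule.span_empty, Submodule.mem_bot] at hx
      exact ⟨fun i => 0, by simp [hx]⟩
  | succ n ih =>
      intro v x hx
      set W : Submodule ℝ (EuclideanSpace ℝ (Fin d)) :=
        Submodule.span ℝ (Set.range (v ∘ Fin.castSucc)) with hW
      set vl := v (Fin.last n) with hvl
      set g : EuclideanSpace ℝ (Fin d) := vl - (orthogonalProjection W vl : _) with hg
      have hg_orth : g ∈ Wᗮ := W.sub_starProjection_mem_orthogonal vl
      -- decompose x
      have hle : Submodule.span ℝ (Set.range v) ≤ W ⊔ Submodule.span ℝ {vl} := by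
        rw [Submodule.span_le]
        rintro _ ⟨i, rfl⟩
        induction i using Fin.lastCases with
        | last => exact Submodule.mem_sup_right (Submodule.mem_span_singleton_self _)
        | cast j =>
            exact Submodule.mem_sup_left (Submodule.subset_span ⟨j, rfl⟩)
      obtain ⟨w, hw, z, hz, hxwz⟩ := Submodule.mem_sup.1 (hle hx)
      obtain ⟨s, rfl⟩ := Submodule.mem_span_singleton.1 hz
      set cl : ℤ := round s with hcl
      set x' : EuclideanSpace ℝ (Fin d) :=
        w + (s - cl) • (orthogonalProjection W vl : _) with hx'
      have hx'W : x' ∈ W := W.add_mem hw (W.smul_mem _ (orthogonalProjection W vl).2)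
      obtain ⟨c', hc'⟩ := ih (v ∘ Fin.castSucc) x' hx'W
      refine ⟨Fin.snoc c' cl, ?_⟩
      have hsum : ∑ i, ((Fin.snoc c' cl : Fin (n+1) → ℤ) i : ℝ) • v i
          = (∑ i : Fin n, (c' i : ℝ) • v (Fin.castSucc i)) + (cl : ℝ) • vl := by
        rw [Fin.sum_univ_castSucc]
        simp [hvl]
      have hdecomp : x - ∑ i, ((Fin.snoc c' cl : Fin (n+1) → ℤ) i : ℝ) • v i
          = (x' - ∑ i : Fin n, (c' i : ℝ) • v (Fin.castSucc i)) + (s - cl) • g := by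
        rw [hsum, ← hxwz, hx', hg]
        simp only [smul_sub, sub_smul]
        abel
      have husumW : (x' - ∑ i : Fin n, (c' i : ℝ) • v (Fin.castSucc i)) ∈ W :=
        W.sub_mem hx'W (Submodule.sum_mem _ fun i _ =>
          W.smul_mem _ (Submodule.subset_span ⟨i, rfl⟩))
      have hinner : (inner ℝ (x' - ∑ i : Fin n, (c' i : ℝ) • v (Fin.castSucc i))
          ((s - cl) • g) : ℝ) = 0 :=
        Submodule.inner_right_of_mem_orthogonal husumW (Wᗮ.smul_mem _ hg_orth)
      have hpyth : ‖x - ∑ i, ((Fin.snoc c' cl : Fin (n+1) → ℤ) i : ℝ) • v i‖ ^ 2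
          = ‖x' - ∑ i : Fin n, (c' i : ℝ) • v (Fin.castSucc i)‖ ^ 2
            + ‖(s - cl) • g‖ ^ 2 := by
        rw [hdecomp, norm_add_sq_real, hinner]; ring
      have hground : (inner ℝ (orthogonalProjection W vl : EuclideanSpace ℝ (Fin d)) g : ℝ) = 0 :=
        Submodule.inner_right_of_mem_orthogonal (orthogonalProjection W vl).2 hg_orth
      have hgnorm : ‖g‖ ^ 2 ≤ ‖vl‖ ^ 2 := by
        have : vl = (orthogonalProjection W vl : EuclideanSpace ℝ (Fin d)) + g := by
          rw [hg]; abel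
        rw [this, norm_add_sq_real, hground]
        nlinarith [sq_nonneg ‖(orthogonalProjection W vl : EuclideanSpace ℝ (Fin d))‖]
      have hround : |s - (cl : ℝ)| ≤ 1/2 := abs_sub_round s
      have hlast : ‖(s - cl) • g‖ ^ 2 ≤ (1/4) * ‖vl‖ ^ 2 := by
        rw [norm_smul, mul_pow, Real.norm_eq_abs]
        have h1 : |s - (cl:ℝ)| ^ 2 ≤ (1/2:ℝ) ^ 2 := pow_le_pow_left₀ (abs_nonneg _) hround 2
        nlinarith [sq_nonneg ‖g‖, h1, hgnorm]
      rw [hpyth, Fin.sum_univ_castSucc, mul_add]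
      have hc'' := hc'
      simp only [Function.comp_apply] at hc''
      exact add_le_add hc'' hlast


/-- The covering radius of a rank-`r` lattice is at most `√r / 2` times its
`r`-th successive minimum. The lattice `Λ` is the set of `ℤ`-linear combinations of
`r` linearly independent vectors `b i` in Euclidean space. -/
theorem covering_radius_le_sqrt_r_div_two_mul_lambda
    (d r : ℕ) (b : Fin r → EuclideanSpace ℝ (Fin d))
    (hb : LinearIndependent ℝ b)
    (Λ : Set (EuclideanSpace ℝ (Fin d)))
    (hΛ : Λ = {v | ∃ c : Fin r → ℤ, v = ∑ i, (c i : ℝ) • b i}) :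
    sSup {t : ℝ | ∃ x ∈ Submodule.span ℝ (Set.range b), t = Metric.infDist x Λ}
      ≤ Real.sqrt r / 2 *
        sInf {R : ℝ | 0 ≤ R ∧ ∃ v : Fin r → EuclideanSpace ℝ (Fin d),
          LinearIndependent ℝ v ∧ ∀ i, v i ∈ Λ ∧ ‖v i‖ ≤ R} := by
  set S := {R : ℝ | 0 ≤ R ∧ ∃ v : Fin r → EuclideanSpace ℝ (Fin d),
      LinearIndependent ℝ v ∧ ∀ i, v i ∈ Λ ∧ ‖v i‖ ≤ R} with hS
  have hmem : ∀ y, y ∈ Λ ↔ y ∈ Submodule.span ℤ (Set.range b) := by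
    intro y
    rw [hΛ, Set.mem_setOf_eq, mem_span_range_iff_exists_fun]
    constructor
    · rintro ⟨c, rfl⟩
      exact ⟨c, by simp_rw [← Int.cast_smul_eq_zsmul ℝ]⟩
    · rintro ⟨c, rfl⟩
      exact ⟨c, by simp_rw [← Int.cast_smul_eq_zsmul ℝ]⟩
  have hSne : S.Nonempty := by
    refine ⟨∑ i, ‖b i‖, Finset.sum_nonneg fun i _ => norm_nonneg _, b, hb, fun i => ⟨?_, ?_⟩⟩
    · exact (hmem _).2 (Submodule.subset_span ⟨i, rfl⟩)
    · exact Finset.single_le_sum (f := fun j => ‖b j‖) (fun j _ => norm_nonneg _)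
        (Finset.mem_univ i)
  have hSinf_nonneg : 0 ≤ sInf S := Real.sInf_nonneg fun R hR => hR.1
  have hbound : ∀ x ∈ Submodule.span ℝ (Set.range b), ∀ R ∈ S,
      Metric.infDist x Λ ≤ Real.sqrt r / 2 * R := by
    intro x hx R hR
    obtain ⟨hR0, v, hv, hvm⟩ := hR
    have hvb : ∀ i, v i ∈ Submodule.span ℝ (Set.range b) := by
      intro i
      have h1 := (hvm i).1
      rw [hΛ, Set.mem_setOf_eq] at h1
      obtain ⟨c, hc⟩ := h1
      rw [hc]
      exact Submodule.sum_mem _ fun j _ =>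
        Submodule.smul_mem _ _ (Submodule.subset_span ⟨j, rfl⟩)
    have hle : Submodule.span ℝ (Set.range v) ≤ Submodule.span ℝ (Set.range b) :=
      Submodule.span_le.2 (by rintro _ ⟨i, rfl⟩; exact hvb i)
    have heq : Submodule.span ℝ (Set.range v) = Submodule.span ℝ (Set.range b) :=
      Submodule.eq_of_le_of_finrank_eq hle
        (by rw [finrank_span_eq_card hv, finrank_span_eq_card hb])
    obtain ⟨c, hc⟩ := nearest_plane d r v x (heq ▸ hx)
    have hyΛ : (∑ i, (c i : ℝ) • v i) ∈ Λ := by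
      refine (hmem _).2 ?_
      have h2 := Submodule.sum_mem (Submodule.span ℤ (Set.range b))
        (fun i (_ : i ∈ Finset.univ) =>
          Submodule.smul_mem _ (c i) ((hmem _).1 (hvm i).1))
      simpa [Int.cast_smul_eq_zsmul ℝ] using h2
    have hd : Metric.infDist x Λ ≤ ‖x - ∑ i, (c i : ℝ) • v i‖ := by
      simpa [dist_eq_norm] using Metric.infDist_le_dist_of_mem hyΛ
    refine hd.trans ?_
    refine le_of_pow_le_pow_left₀ two_ne_zero (by positivity) ?_
    calc ‖x - ∑ i, (c i : ℝ) • v i‖ ^ 2 ≤ (1/4) * ∑ i, ‖v i‖ ^ 2 := hc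
      _ ≤ (1/4) * (r * R ^ 2) := by
          refine mul_le_mul_of_nonneg_left ?_ (by norm_num)
          calc ∑ i, ‖v i‖ ^ 2 ≤ ∑ _i : Fin r, R ^ 2 :=
                Finset.sum_le_sum fun i _ =>
                  pow_le_pow_left₀ (norm_nonneg _) (hvm i).2 2
            _ = r * R ^ 2 := by simp [mul_comm]
      _ = (Real.sqrt r / 2 * R) ^ 2 := by
          rw [mul_pow, div_pow, Real.sq_sqrt (Nat.cast_nonneg r)]; ring
  refine Real.sSup_le ?_ (mul_nonneg (by positivity) hSinf_nonneg)
  rintro t ⟨x, hx, rfl⟩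
  rcases Nat.eq_zero_or_pos r with hr | hr
  · subst hr
    obtain ⟨R, hR⟩ := hSne
    have h0 := hbound x hx R hR
    simp only [Nat.cast_zero, Real.sqrt_zero, zero_div, zero_mul] at h0 ⊢
    exact h0
  · have hpos : 0 < Real.sqrt r / 2 :=
      div_pos (Real.sqrt_pos.2 (by exact_mod_cast hr)) two_pos
    rw [mul_comm, ← div_le_iff₀ hpos]
    refine le_csInf hSne fun R hR => ?_
    rw [div_le_iff₀ hpos, mul_comm]
    exact hbound x hx R hR
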